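/- arXiv:2103.05341 — 3 statements merged into one kernel-verified Lean document; each statement's English description precedes it below -/
import Mathlib

section
/- Fix $\lambda > 0$ and $M > 0$. Let $i^\infty(C^*)$ denote the smaller root of $x^2 - [(1+\lambda)C^* + M]x + MC^* = 0$. Then $\lim_{C^* \to \infty} i^\infty(C^*) = M/(1+\lambda)$. -/
theorem limit_infinite_receptors (lam M : ℝ) (hlam : 0 < lam) (hM : 0 < M) :
    Filter.Tendsto
      (fun Cstar : ℝ =>
        (1 / 2) * ((1 + lam) * Cstar + M -
          Real.sqrt (((1 + lam) * Cstar + M) ^ 2 - 4 * M * Cstar)))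
      Filter.atTop (nhds (M / (1 + lam))) := by
  set a := 1 + lam with ha
  have ha0 : 0 < a := by positivity
  set F : ℝ → ℝ := fun t =>
    2 * M / (a + M * t + Real.sqrt (a ^ 2 + 2 * (a - 2) * M * t + M ^ 2 * t ^ 2)) with hF
  have hden0 : a + M * 0 + Real.sqrt (a ^ 2 + 2 * (a - 2) * M * 0 + M ^ 2 * 0 ^ 2) = 2 * a := by
    simp [Real.sqrt_sq ha0.le]
    ring
  have hFcont : ContinuousAt F 0 := by
    apply ContinuousAt.div
    · fun_prop
    · fun_prop
    · rw [hden0]; positivity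
  have hF0 : F 0 = M / a := by
    simp only [hF]
    rw [hden0]
    rw [div_eq_div_iff (by positivity) (by positivity)]
    ring
  have htend : Filter.Tendsto (fun C : ℝ => F C⁻¹) Filter.atTop (nhds (M / a)) := by
    rw [← hF0]
    exact hFcont.tendsto.comp tendsto_inv_atTop_zero
  refine htend.congr' ?_
  filter_upwards [Filter.eventually_gt_atTop 0] with C hC
  have hD : 0 ≤ (a * C + M) ^ 2 - 4 * M * C := by nlinarith [sq_nonneg (a * C - M)]
  have hsq : 0 ≤ Real.sqrt ((a * C + M) ^ 2 - 4 * M * C) := Real.sqrt_nonneg _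
  have hinner : a ^ 2 + 2 * (a - 2) * M * C⁻¹ + M ^ 2 * C⁻¹ ^ 2
      = ((a * C + M) ^ 2 - 4 * M * C) / C ^ 2 := by
    field_simp
    ring
  have hsqrt : Real.sqrt (a ^ 2 + 2 * (a - 2) * M * C⁻¹ + M ^ 2 * C⁻¹ ^ 2)
      = Real.sqrt ((a * C + M) ^ 2 - 4 * M * C) / C := by
    rw [hinner, Real.sqrt_div hD, Real.sqrt_sq hC.le]
  simp only [hF, hsqrt]
  have hbpos : 0 < a + M * C⁻¹ + Real.sqrt ((a * C + M) ^ 2 - 4 * M * C) / C := by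
    have : 0 < M * C⁻¹ := by positivity
    have : 0 ≤ Real.sqrt ((a * C + M) ^ 2 - 4 * M * C) / C := by positivity
    linarith
  rw [div_eq_iff (ne_of_gt hbpos)]
  have hs2 : Real.sqrt ((a * C + M) ^ 2 - 4 * M * C) ^ 2 = (a * C + M) ^ 2 - 4 * M * C :=
    Real.sq_sqrt hD
  field_simp
  nlinarith [hs2, Real.sq_sqrt (show 0 ≤ (a * C + M) ^ 2 - M * C * 4 by linarith)]
end

section
/- The function $i^\infty(M)$ (smaller root of $x^2 - [(1+\lambda)C^* + M]x + MC^* = 0$, with $\lambda > 0$, $C^* > 0$ fixed) is concave in $M$ on $(0,\infty)$. -/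
theorem steady_state_concave (lam Cstar : ℝ) (hlam : 0 < lam) (hC : 0 < Cstar) :
    ConcaveOn ℝ (Set.Ioi 0)
      (fun M : ℝ =>
        (1 / 2) * ((1 + lam) * Cstar + M -
          Real.sqrt (((1 + lam) * Cstar + M) ^ 2 - 4 * M * Cstar))) := by
  set a : ℝ := (lam - 1) * Cstar with ha
  set s : ℝ := 2 * Real.sqrt lam * Cstar with hs
  set c0 : ℂ := ⟨a, s⟩ with hc0
  have hs2 : s ^ 2 = 4 * lam * Cstar ^ 2 := by
    rw [hs, mul_pow, mul_pow, Real.sq_sqrt hlam.le]; ring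
  let f : ℝ →ᵃ[ℝ] ℂ := Complex.ofRealAm.toLinearMap.toAffineMap + AffineMap.const ℝ ℝ c0
  have hf : ∀ M : ℝ, f M = (M : ℂ) + c0 := fun M => rfl
  have hconv : ConvexOn ℝ (Set.Ioi 0) (fun M : ℝ => ‖f M‖) := by
    have h := (convexOn_univ_norm (E := ℂ)).comp_affineMap f
    exact h.subset (Set.subset_univ _) (convex_Ioi 0)
  have hkey : ∀ M : ℝ,
      Real.sqrt (((1 + lam) * Cstar + M) ^ 2 - 4 * M * Cstar) = ‖f M‖ := by
    intro M
    rw [hf, Complex.norm_def, Complex.normSq_apply]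
    congr 1
    simp only [Complex.add_re, Complex.add_im, Complex.ofReal_re, Complex.ofReal_im, hc0]
    rw [ha]; linear_combination (-4 * Cstar ^ 2) * Real.sq_sqrt hlam.le
  have h1 : ConcaveOn ℝ (Set.Ioi 0) (fun M : ℝ => (1 / 2) * ((1 + lam) * Cstar + M)) := by
    refine ⟨convex_Ioi 0, ?_⟩
    intro x hx y hy p q hp hq hpq
    simp only [smul_eq_mul]
    nlinarith
  have h2 : ConvexOn ℝ (Set.Ioi 0) (fun M : ℝ => (1 / 2) * ‖f M‖) :=
    hconv.smul (by norm_num)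
  have := h1.sub h2
  convert this using 1
  · rfl
  · rfl
  funext M
  simp only [Pi.sub_apply, hkey M]
  ring
end

section
/- Let $f(\epsilon) = \frac{M}{2}\left\{(1+\lambda)\frac{C^*}{M} + 1 - \epsilon - \sqrt{\left[(1+\lambda)\frac{C^*}{M} + 1 - \epsilon\right]^2 - 4(1-\epsilon)\frac{C^*}{M}}\right\}$ with $\lambda > 0$, $C^*, M > 0$, and let $i = f(0)$. Then the derivative of $f$ at $\epsilon = 0$ equals $-\frac{i(C^* - i)}{C^*(1 - i^2/(MC^*))}$. -/
theorem scaling_law_derivative (lam Cstar M i : ℝ) (f : ℝ → ℝ)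
    (hlam : 0 < lam) (hC : 0 < Cstar) (hM : 0 < M)
    (hf : f = fun ε : ℝ =>
      (M / 2) * ((1 + lam) * (Cstar / M) + 1 - ε -
        Real.sqrt (((1 + lam) * (Cstar / M) + 1 - ε) ^ 2 - 4 * (1 - ε) * (Cstar / M))))
    (hi : i = f 0) :
    deriv f 0 = -(i * (Cstar - i)) / (Cstar * (1 - i ^ 2 / (M * Cstar))) := by
  have hM' : M ≠ 0 := ne_of_gt hM
  set c : ℝ := Cstar / M with hc
  set A : ℝ := (1 + lam) * c + 1 with hA
  have hc0 : 0 < c := div_pos hC hM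
  have hD : 0 < A ^ 2 - 4 * c := by
    have := mul_pos hlam hc0
    nlinarith [sq_nonneg ((1 + lam) * c - 1)]
  set s : ℝ := Real.sqrt (A ^ 2 - 4 * c) with hs
  have hs0 : 0 < s := Real.sqrt_pos.mpr hD
  have hs2 : s ^ 2 = A ^ 2 - 4 * c := Real.sq_sqrt hD.le
  have h1 : HasDerivAt (fun ε : ℝ => A - ε) (-1) 0 := by
    simpa using (hasDerivAt_id (0 : ℝ)).const_sub A
  have h2 : HasDerivAt (fun ε : ℝ => 4 * (1 - ε) * c) (-1 * (4 * c)) 0 := by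
    have h := ((hasDerivAt_id (0 : ℝ)).const_sub 1).mul_const (4 * c)
    simp only [id] at h
    rw [show (fun ε : ℝ => 4 * (1 - ε) * c) = fun ε => (1 - ε) * (4 * c) from
      funext fun ε => by ring]
    exact h
  have hg : HasDerivAt (fun ε : ℝ => (A - ε) ^ 2 - 4 * (1 - ε) * c)
      (-2 * A + 4 * c) 0 := by
    have h := (h1.pow 2).sub h2
    refine h.congr_deriv ?_
    push_cast
    ring
  have hg0 : (A - (0:ℝ)) ^ 2 - 4 * (1 - (0:ℝ)) * c ≠ 0 := by
    have he : (A - (0:ℝ)) ^ 2 - 4 * (1 - (0:ℝ)) * c = A ^ 2 - 4 * c := by ring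
    rw [he]; exact ne_of_gt hD
  have hsq := hg.sqrt hg0
  have hsval : Real.sqrt ((A - (0:ℝ)) ^ 2 - 4 * (1 - (0:ℝ)) * c) = s := by
    rw [hs]
    norm_num
  have hfd : HasDerivAt f ((M / 2) * (-1 - (-2 * A + 4 * c) / (2 * s))) 0 := by
    rw [hf]
    have h := (h1.sub hsq).const_mul (M / 2)
    rw [hsval] at h
    exact h
  have hderiv : deriv f 0 = (M / 2) * (-1 - (-2 * A + 4 * c) / (2 * s)) := hfd.deriv
  have hival : i = (M / 2) * (A - s) := by
    rw [hi, hf]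
    simp only
    rw [hsval]
    ring
  -- key algebraic facts
  have hApos : 0 < A := by positivity
  have hsA : s < A := by nlinarith
  have hipos : 0 < i := by rw [hival]; nlinarith
  have hquad : i ^ 2 - M * A * i + M * Cstar = 0 := by
    have hCc : Cstar = c * M := by rw [hc]; field_simp
    rw [hival, hCc]; linear_combination (M ^ 2 / 4) * hs2
  have hilt : i ^ 2 < M * Cstar := by
    have hCc : Cstar = c * M := by rw [hc]; field_simp
    have he : M * Cstar - i ^ 2 = (M ^ 2 / 2) * (s * (A - s)) := by
      rw [hival, hCc]; linear_combination (M ^ 2 / 4) * hs2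
    have hp : 0 < (M ^ 2 / 2) * (s * (A - s)) := by
      apply mul_pos (by positivity) (mul_pos hs0 (sub_pos.mpr hsA))
    linarith [he ▸ hp]
  have hden : Cstar * (1 - i ^ 2 / (M * Cstar)) ≠ 0 := by
    have : 0 < 1 - i ^ 2 / (M * Cstar) := by
      have h1 : i ^ 2 / (M * Cstar) < 1 := by
        rw [div_lt_one (by positivity)]; exact hilt
      linarith
    positivity
  have hMs : M * s = M * A - 2 * i := by rw [hival]; ring
  have hd2 : Cstar * (1 - i ^ 2 / (M * Cstar)) = i * s := by
    field_simp
    linear_combination hquad - i * hMs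
  have key : M / 2 * (-1 - (-2 * A + 4 * c) / (2 * s)) = -(Cstar - i) / s := by
    rw [hival, hA, hc]
    field_simp
    ring
  rw [hderiv, hd2, key]
  rw [neg_div, neg_div, mul_comm i s, ← div_div, mul_div_assoc,
    mul_div_cancel_left₀ _ hipos.ne']
end
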